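/- Let (η_n) be a positive sequence with √n·η_n → ∞ as n → ∞. Then liminf_{n→∞} −(1/n)·log P[â_ML(U₁ⁿ) − a > η_n] ≥ log a and liminf_{n→∞} −(1/n)·log P[â_ML(U₁ⁿ) − a < −η_n] ≥ log a; equivalently, for every ε > 0 there exists N such that for all n ≥ N, both P[â_ML(U₁ⁿ) − a > η_n] and P[â_ML(U₁ⁿ) − a < −η_n] are at most exp(−n·(log a − ε)). -/

import Mathlib

open MeasureTheory ProbabilityTheory Finset Filter

/-- The maximum-likelihood estimate `â_ML(u₁ⁿ) = (Σ_{i=1}^{n−1} uᵢu_{i+1}) / (Σ_{i=1}^{n−1} uᵢ²)`. -/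
noncomputable def aML {Ω : Type*} (U : ℕ → Ω → ℝ) (n : ℕ) (ω : Ω) : ℝ :=
  (∑ i ∈ Finset.Icc 1 (n - 1), U i ω * U (i + 1) ω)
    / (∑ i ∈ Finset.Icc 1 (n - 1), (U i ω) ^ 2)

open Real
open scoped NNReal ENNReal

set_option linter.unusedSectionVars false
set_option linter.unusedVariables false
set_option linter.deprecated false

namespace S6Aux


lemma indep_mono' {Ω : Type*} {mΩ : MeasurableSpace Ω} {μ : Measure Ω}
    {m₁ m₁' m₂ m₂' : MeasurableSpace Ω}
    (h : ProbabilityTheory.Indep m₁' m₂' μ) (h1 : m₁ ≤ m₁') (h2 : m₂ ≤ m₂') :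
    ProbabilityTheory.Indep m₁ m₂ μ := by
  rw [ProbabilityTheory.Indep_iff] at h ⊢
  exact fun t1 t2 h1' h2' => h t1 t2 (h1 _ h1') (h2 _ h2')

lemma lintegral_exp_mul_gaussian (t : ℝ) (v : ℝ≥0) (hv : v ≠ 0) :
    ∫⁻ z, ENNReal.ofReal (Real.exp (t * z)) ∂(gaussianReal 0 v) =
      ENNReal.ofReal (Real.exp (t ^ 2 * v / 2)) := by
  rw [gaussianReal_of_var_ne_zero _ hv,
    lintegral_withDensity_eq_lintegral_mul _ (measurable_gaussianPDF _ _)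
      (by fun_prop)]
  have hpt : ∀ z : ℝ, (gaussianPDF 0 v * fun z => ENNReal.ofReal (Real.exp (t * z))) z
      = ENNReal.ofReal (Real.exp (t ^ 2 * v / 2)) * gaussianPDF (t * v) v z := by
    intro z
    simp only [Pi.mul_apply, gaussianPDF]
    rw [← ENNReal.ofReal_mul (gaussianPDFReal_nonneg _ _ _),
      ← ENNReal.ofReal_mul (by positivity)]
    congr 1
    simp only [gaussianPDFReal]
    have hv0 : (0:ℝ) < (v:ℝ) := lt_of_le_of_ne v.2 (by exact_mod_cast hv.symm)
    rw [mul_assoc, ← Real.exp_add, mul_left_comm, ← Real.exp_add]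
    congr 2
    field_simp
    ring
  simp_rw [hpt]
  rw [lintegral_const_mul _ (measurable_gaussianPDF _ _), lintegral_gaussianPDF_eq_one _ hv,
    mul_one]

lemma gaussianPDFReal_le (m : ℝ) (v : ℝ≥0) (x : ℝ) :
    gaussianPDFReal m v x ≤ (Real.sqrt (2 * π * v))⁻¹ := by
  rw [gaussianPDFReal]
  nth_rewrite 2 [← mul_one ((Real.sqrt (2 * π * v))⁻¹)]
  refine mul_le_mul_of_nonneg_left ?_ (by positivity)
  rw [Real.exp_le_one_iff, neg_div]
  have : (0:ℝ) ≤ (x - m)^2 / (2 * (v:ℝ)) := by positivity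
  linarith

lemma gaussianReal_Ioo_le (v : ℝ≥0) (hv : v ≠ 0) (x y : ℝ) :
    gaussianReal 0 v (Set.Ioo x y) ≤ ENNReal.ofReal ((y - x) * (Real.sqrt (2 * π * v))⁻¹) := by
  rw [gaussianReal_apply _ hv]
  calc ∫⁻ z in Set.Ioo x y, gaussianPDF 0 v z
      ≤ ∫⁻ _ in Set.Ioo x y, ENNReal.ofReal ((Real.sqrt (2 * π * v))⁻¹) := by
        refine setLIntegral_mono (by fun_prop) fun z _ => ?_
        exact ENNReal.ofReal_le_ofReal (gaussianPDFReal_le _ _ _)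
    _ = ENNReal.ofReal ((Real.sqrt (2 * π * v))⁻¹) * volume (Set.Ioo x y) := by
        rw [setLIntegral_const]
    _ ≤ ENNReal.ofReal ((y - x) * (Real.sqrt (2 * π * v))⁻¹) := by
        rw [Real.volume_Ioo, ← ENNReal.ofReal_mul (by positivity)]
        exact ENNReal.ofReal_le_ofReal (by rw [mul_comm])






variable {Ω : Type*} {mΩ : MeasurableSpace Ω} {μ : Measure Ω} [IsProbabilityMeasure μ]
  {a σ : ℝ} {Z U : ℕ → Ω → ℝ}

noncomputable def Msum (U Z : ℕ → Ω → ℝ) (m : ℕ) (ω : Ω) : ℝ :=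
  ∑ i ∈ Finset.Icc 1 m, U i ω * Z (i + 1) ω

noncomputable def Ssum (U : ℕ → Ω → ℝ) (m : ℕ) (ω : Ω) : ℝ :=
  ∑ i ∈ Finset.Icc 1 m, (U i ω) ^ 2

lemma hUmeas (hZmeas : ∀ i, Measurable (Z i)) (hU0 : U 0 = fun _ => 0)
    (hU : ∀ i, U (i + 1) = fun ω => a * U i ω + Z (i + 1) ω) : ∀ i, Measurable (U i) := by
  intro i
  induction i with
  | zero => rw [hU0]; exact measurable_const
  | succ n ih => rw [hU n]; exact (measurable_const.mul ih).add (hZmeas (n + 1))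

lemma measurable_Msum (hZmeas : ∀ i, Measurable (Z i)) (hU0 : U 0 = fun _ => 0)
    (hU : ∀ i, U (i + 1) = fun ω => a * U i ω + Z (i + 1) ω) (m : ℕ) :
    Measurable (Msum U Z m) :=
  Finset.measurable_sum _ fun i _ => (hUmeas hZmeas hU0 hU i).mul (hZmeas (i + 1))

lemma measurable_Ssum (hZmeas : ∀ i, Measurable (Z i)) (hU0 : U 0 = fun _ => 0)
    (hU : ∀ i, U (i + 1) = fun ω => a * U i ω + Z (i + 1) ω) (m : ℕ) :
    Measurable (Ssum U m) :=
  Finset.measurable_sum _ fun i _ => (hUmeas hZmeas hU0 hU i).pow measurable_const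

/-- the σ-algebra generated by `Z 0, ..., Z m`. -/
def Gm (Z : ℕ → Ω → ℝ) (m : ℕ) : MeasurableSpace Ω :=
  ⨆ i ∈ Set.Iic m, MeasurableSpace.comap (Z i) inferInstance

lemma measurable_G_Z {m i : ℕ} (hi : i ≤ m) : Measurable[Gm Z m] (Z i) :=
  measurable_iff_comap_le.mpr
    (le_biSup (f := fun i => MeasurableSpace.comap (Z i) inferInstance) (Set.mem_Iic.mpr hi))

lemma measurable_G_U (hU0 : U 0 = fun _ => 0)
    (hU : ∀ i, U (i + 1) = fun ω => a * U i ω + Z (i + 1) ω)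
    {m : ℕ} : ∀ {i : ℕ}, i ≤ m → Measurable[Gm Z m] (U i) := by
  intro i
  induction i with
  | zero => intro _; rw [hU0]; exact measurable_const
  | succ n ih =>
      intro hn
      rw [hU n]
      exact Measurable.add (measurable_const.mul (ih (Nat.le_of_succ_le hn)))
        (measurable_G_Z hn)

lemma indep_G (hZmeas : ∀ i, Measurable (Z i))
    (hZindep : iIndepFun Z μ) {m k : ℕ} (hk : m < k) :
    ProbabilityTheory.Indep (Gm Z m) (MeasurableSpace.comap (Z k) inferInstance) μ := by
  have h := indep_iSup_of_disjoint (μ := μ)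
    (fun i => measurable_iff_comap_le.mp (hZmeas i)) hZindep.iIndep
    (S := Set.Iic m) (T := {k}) (by simp [Set.disjoint_singleton_right, hk.not_ge])
  simpa [Gm] using h

lemma indepFun_of_G {β : Type*} [MeasurableSpace β] {X : Ω → β}
    (hZmeas : ∀ i, Measurable (Z i))
    (hZindep : iIndepFun Z μ) {m k : ℕ} (hk : m < k)
    (hX : Measurable[Gm Z m] X) : IndepFun X (Z k) μ :=
  (IndepFun_iff_Indep _ _ _).mpr
    (indep_mono' (indep_G hZmeas hZindep hk) (measurable_iff_comap_le.mp hX) le_rfl)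

lemma lintegral_exp_le (hσ : 0 < σ) (hZmeas : ∀ i, Measurable (Z i))
    (hZindep : iIndepFun Z μ)
    (hZlaw : ∀ i, Measure.map (Z i) μ = gaussianReal 0 ⟨σ ^ 2, sq_nonneg σ⟩)
    (hU0 : U 0 = fun _ => 0) (hU : ∀ i, U (i + 1) = fun ω => a * U i ω + Z (i + 1) ω)
    (θ lam : ℝ) (hlam : θ ^ 2 * σ ^ 2 / 2 ≤ lam) :
    ∀ m, ∫⁻ ω, ENNReal.ofReal (Real.exp (θ * Msum U Z m ω - lam * Ssum U m ω)) ∂μ ≤ 1 := by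
  have hσ2 : (0:ℝ) < σ ^ 2 := by positivity
  have hv : (⟨σ ^ 2, sq_nonneg σ⟩ : ℝ≥0) ≠ 0 :=
    fun h => hσ2.ne' (congrArg NNReal.toReal h)
  intro m
  induction m with
  | zero =>
      simp [Msum, Ssum, lintegral_const]
  | succ m ih =>
      set X : Ω → ℝ × ℝ :=
        fun ω => (θ * Msum U Z m ω - lam * Ssum U m ω, U (m + 1) ω) with hX
      have hXmeas : Measurable X := by
        refine Measurable.prodMk ?_ (hUmeas hZmeas hU0 hU (m + 1))
        exact ((measurable_Msum hZmeas hU0 hU m).const_mul θ).sub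
          ((measurable_Ssum hZmeas hU0 hU m).const_mul lam)
      have hXG : Measurable[Gm Z (m + 1)] X := by
        have hMsG : Measurable[Gm Z (m + 1)] (Msum U Z m) := by
          refine Finset.measurable_sum _ fun i hi => ?_
          have hi' : i ≤ m := by simpa using (Finset.mem_Icc.mp hi).2
          exact Measurable.mul (measurable_G_U hU0 hU (hi'.trans (Nat.le_succ m)))
            (measurable_G_Z (by omega))
        have hSsG : Measurable[Gm Z (m + 1)] (Ssum U m) := by
          refine Finset.measurable_sum _ fun i hi => ?_
          have hi' : i ≤ m := by simpa using (Finset.mem_Icc.mp hi).2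
          exact (measurable_G_U hU0 hU (hi'.trans (Nat.le_succ m))).pow measurable_const
        exact Measurable.prodMk ((hMsG.const_mul θ).sub (hSsG.const_mul lam))
          (measurable_G_U hU0 hU le_rfl)
      have hpair : IndepFun X (Z (m + 2)) μ :=
        indepFun_of_G hZmeas hZindep (Nat.lt_succ_self (m + 1)) hXG
      have hmap : μ.map (fun ω => (X ω, Z (m + 2) ω))
          = (μ.map X).prod (gaussianReal 0 ⟨σ ^ 2, sq_nonneg σ⟩) := by
        rw [← hZlaw (m + 2)]
        exact (indepFun_iff_map_prod_eq_prod_map_map hXmeas.aemeasurable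
          (hZmeas _).aemeasurable).mp hpair
      set F : (ℝ × ℝ) × ℝ → ℝ≥0∞ :=
        fun p => ENNReal.ofReal (Real.exp (p.1.1 + (θ * p.1.2 * p.2 - lam * p.1.2 ^ 2))) with hF
      have hFmeas : Measurable F := by fun_prop
      have hsum : ∀ ω, θ * Msum U Z (m + 1) ω - lam * Ssum U (m + 1) ω
          = (θ * Msum U Z m ω - lam * Ssum U m ω)
            + (θ * U (m + 1) ω * Z (m + 2) ω - lam * (U (m + 1) ω) ^ 2) := by
        intro ω
        simp only [Msum, Ssum, Finset.sum_Icc_succ_top (Nat.le_add_left 1 m)]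
        ring
      have hinner : ∀ x : ℝ × ℝ,
          ∫⁻ y, F (x, y) ∂(gaussianReal 0 ⟨σ ^ 2, sq_nonneg σ⟩)
            ≤ ENNReal.ofReal (Real.exp x.1) := by
        intro x
        have hptw : ∀ y : ℝ, F (x, y)
            = ENNReal.ofReal (Real.exp (x.1 - lam * x.2 ^ 2))
              * ENNReal.ofReal (Real.exp ((θ * x.2) * y)) := by
          intro y
          rw [hF]
          simp only
          rw [← ENNReal.ofReal_mul (Real.exp_nonneg _), ← Real.exp_add]
          congr 2
          ring
        simp_rw [hptw]
        rw [lintegral_const_mul _ (by fun_prop), lintegral_exp_mul_gaussian _ _ hv,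
          ← ENNReal.ofReal_mul (Real.exp_nonneg _), ← Real.exp_add]
        refine ENNReal.ofReal_le_ofReal (Real.exp_le_exp.mpr ?_)
        change x.1 - lam * x.2 ^ 2 + (θ * x.2) ^ 2 * σ ^ 2 / 2 ≤ x.1
        nlinarith [sq_nonneg x.2, mul_le_mul_of_nonneg_right hlam (sq_nonneg x.2)]
      calc ∫⁻ ω, ENNReal.ofReal
              (Real.exp (θ * Msum U Z (m + 1) ω - lam * Ssum U (m + 1) ω)) ∂μ
          = ∫⁻ ω, F (X ω, Z (m + 2) ω) ∂μ := by
            refine lintegral_congr fun ω => ?_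
            rw [hsum ω]
        _ = ∫⁻ p, F p ∂(μ.map (fun ω => (X ω, Z (m + 2) ω))) :=
            (lintegral_map hFmeas (hXmeas.prodMk (hZmeas _))).symm
        _ = ∫⁻ x, ∫⁻ y, F (x, y) ∂(gaussianReal 0 ⟨σ ^ 2, sq_nonneg σ⟩) ∂(μ.map X) := by
            rw [hmap]
            haveI := instIsProbabilityMeasureGaussianReal 0 ⟨σ ^ 2, sq_nonneg σ⟩
            exact lintegral_prod _ hFmeas.aemeasurable
        _ ≤ ∫⁻ x, ENNReal.ofReal (Real.exp x.1) ∂(μ.map X) := lintegral_mono hinner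
        _ = ∫⁻ ω, ENNReal.ofReal (Real.exp (θ * Msum U Z m ω - lam * Ssum U m ω)) ∂μ := by
            rw [lintegral_map (by fun_prop) hXmeas]
        _ ≤ 1 := ih

















lemma tail_bound (hσ : 0 < σ) (hZmeas : ∀ i, Measurable (Z i))
    (hZindep : iIndepFun Z μ)
    (hZlaw : ∀ i, Measure.map (Z i) μ = gaussianReal 0 ⟨σ ^ 2, sq_nonneg σ⟩)
    (hU0 : U 0 = fun _ => 0) (hU : ∀ i, U (i + 1) = fun ω => a * U i ω + Z (i + 1) ω)
    (m : ℕ) {ηn r : ℝ} (hη : 0 < ηn) (hr : 0 < r) (s : ℝ) (hs : s = 1 ∨ s = -1) :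
    μ {ω | ηn * Ssum U m ω < s * Msum U Z m ω ∧ r ≤ Ssum U m ω}
      ≤ ENNReal.ofReal (Real.exp (-(ηn ^ 2 / (2 * σ ^ 2)) * r)) := by
  set θ : ℝ := s * ηn / σ ^ 2 with hθ
  set lam : ℝ := ηn ^ 2 / (2 * σ ^ 2) with hlamdef
  have hs2 : s ^ 2 = 1 := by rcases hs with h | h <;> rw [h] <;> norm_num
  have hlam : θ ^ 2 * σ ^ 2 / 2 ≤ lam := by
    have hσ2 : (0:ℝ) < σ ^ 2 := by positivity
    rw [hθ, hlamdef, div_pow, mul_pow, hs2, one_mul]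
    apply le_of_eq
    field_simp
  have hMm := measurable_Msum hZmeas hU0 hU m
  have hSm := measurable_Ssum hZmeas hU0 hU m
  have hint := lintegral_exp_le hσ hZmeas hZindep hZlaw hU0 hU θ lam hlam m
  set f : Ω → ℝ≥0∞ :=
    fun ω => ENNReal.ofReal (Real.exp (θ * Msum U Z m ω - lam * Ssum U m ω)) with hf
  have hfmeas : Measurable f :=
    (Real.measurable_exp.comp ((hMm.const_mul θ).sub (hSm.const_mul lam))).ennreal_ofReal
  set c : ℝ≥0∞ := ENNReal.ofReal (Real.exp (lam * r)) with hc
  have hsub : {ω | ηn * Ssum U m ω < s * Msum U Z m ω ∧ r ≤ Ssum U m ω}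
      ⊆ {ω | c ≤ f ω} := by
    rintro ω ⟨h1, h2⟩
    refine ENNReal.ofReal_le_ofReal (Real.exp_le_exp.mpr ?_)
    have hθM : θ * Msum U Z m ω = (ηn / σ ^ 2) * (s * Msum U Z m ω) := by
      rw [hθ]; rcases hs with h | h <;> rw [h] <;> ring
    rw [hθM, hlamdef]
    have h3 : (ηn / σ ^ 2) * (ηn * Ssum U m ω) ≤ (ηn / σ ^ 2) * (s * Msum U Z m ω) :=
      mul_le_mul_of_nonneg_left h1.le (by positivity)
    have hσ2 : (0:ℝ) < σ ^ 2 := by positivity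
    have key : (ηn / σ ^ 2) * (ηn * Ssum U m ω) = 2 * (ηn ^ 2 / (2 * σ ^ 2)) * Ssum U m ω := by
      field_simp
    nlinarith [mul_le_mul_of_nonneg_left h2 (by positivity : (0:ℝ) ≤ ηn ^ 2 / (2 * σ ^ 2))]
  have hc0 : c ≠ 0 := (ENNReal.ofReal_pos.mpr (Real.exp_pos _)).ne'
  have hctop : c ≠ ⊤ := ENNReal.ofReal_ne_top
  calc μ {ω | ηn * Ssum U m ω < s * Msum U Z m ω ∧ r ≤ Ssum U m ω}
      ≤ μ {ω | c ≤ f ω} := measure_mono hsub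
    _ ≤ (∫⁻ ω, f ω ∂μ) / c := meas_ge_le_lintegral_div hfmeas.aemeasurable hc0 hctop
    _ ≤ 1 / c := by gcongr
    _ = ENNReal.ofReal (Real.exp (-(ηn ^ 2 / (2 * σ ^ 2)) * r)) := by
      rw [one_div, hc, ← ENNReal.ofReal_inv_of_pos (Real.exp_pos _), ← Real.exp_neg, hlamdef]
      ring_nf


/-- σ-algebra generated by `Z i`, `2 ≤ i ≤ m`. -/
def G2 (Z : ℕ → Ω → ℝ) (m : ℕ) : MeasurableSpace Ω :=
  ⨆ i ∈ Set.Icc 2 m, MeasurableSpace.comap (Z i) inferInstance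

lemma measurable_G2_Z {m i : ℕ} (h2 : 2 ≤ i) (hi : i ≤ m) : Measurable[G2 Z m] (Z i) :=
  measurable_iff_comap_le.mpr
    (le_biSup (f := fun i => MeasurableSpace.comap (Z i) inferInstance)
      (Set.mem_Icc.mpr ⟨h2, hi⟩))

lemma measurable_G2_shift (hU0 : U 0 = fun _ => 0)
    (hU : ∀ i, U (i + 1) = fun ω => a * U i ω + Z (i + 1) ω) (m : ℕ) :
    ∀ k ≤ m, Measurable[G2 Z (m + 1)] (fun ω => U (k + 1) ω - a ^ k * Z 1 ω) := by
  intro k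
  induction k with
  | zero =>
      intro _
      have h1 : (fun ω => U 1 ω - a ^ 0 * Z 1 ω) = fun _ => (0:ℝ) := by
        funext ω
        rw [hU 0, hU0]
        simp
      rw [h1]
      exact measurable_const
  | succ k ih =>
      intro hk
      have h1 : (fun ω => U (k + 2) ω - a ^ (k + 1) * Z 1 ω)
          = fun ω => a * (U (k + 1) ω - a ^ k * Z 1 ω) + Z (k + 2) ω := by
        funext ω
        rw [hU (k + 1)]
        ring
      rw [h1]
      exact (measurable_const.mul (ih (by omega))).add (measurable_G2_Z (by omega) (by omega))

lemma small_ball (ha : 0 < a) (hσ : 0 < σ) (hZmeas : ∀ i, Measurable (Z i))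
    (hZindep : iIndepFun Z μ)
    (hZlaw : ∀ i, Measure.map (Z i) μ = gaussianReal 0 ⟨σ ^ 2, sq_nonneg σ⟩)
    (hU0 : U 0 = fun _ => 0) (hU : ∀ i, U (i + 1) = fun ω => a * U i ω + Z (i + 1) ω)
    (m : ℕ) {δ : ℝ} (hδ : 0 < δ) :
    μ {ω | |U (m + 1) ω| < δ}
      ≤ ENNReal.ofReal ((2 * δ / a ^ m) * (Real.sqrt (2 * π * σ ^ 2))⁻¹) := by
  have hσ2 : (0:ℝ) < σ ^ 2 := by positivity
  have hv : (⟨σ ^ 2, sq_nonneg σ⟩ : ℝ≥0) ≠ 0 :=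
    fun h => hσ2.ne' (congrArg NNReal.toReal h)
  have hc : (0:ℝ) < a ^ m := pow_pos ha m
  set c : ℝ := a ^ m with hcdef
  set R : Ω → ℝ := fun ω => U (m + 1) ω - c * Z 1 ω with hR
  have hRmeas : Measurable R :=
    (hUmeas hZmeas hU0 hU (m + 1)).sub (measurable_const.mul (hZmeas 1))
  have hRG : Measurable[G2 Z (m + 1)] R := measurable_G2_shift hU0 hU m m le_rfl
  have hindepG : ProbabilityTheory.Indep (G2 Z (m + 1))
      (MeasurableSpace.comap (Z 1) inferInstance) μ := by
    have h := indep_iSup_of_disjoint (μ := μ)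
      (fun i => measurable_iff_comap_le.mp (hZmeas i)) hZindep.iIndep
      (S := Set.Icc 2 (m + 1)) (T := {1})
      (by simp [Set.disjoint_singleton_right])
    simpa [G2] using h
  have hindep : IndepFun R (Z 1) μ :=
    (IndepFun_iff_Indep _ _ _).mpr
      (indep_mono' hindepG (measurable_iff_comap_le.mp hRG) le_rfl)
  have hmap : μ.map (fun ω => (R ω, Z 1 ω))
      = (μ.map R).prod (gaussianReal 0 ⟨σ ^ 2, sq_nonneg σ⟩) := by
    rw [← hZlaw 1]
    exact (indepFun_iff_map_prod_eq_prod_map_map hRmeas.aemeasurable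
      (hZmeas 1).aemeasurable).mp hindep
  set A : Set (ℝ × ℝ) := {p : ℝ × ℝ | |p.1 + c * p.2| < δ} with hA
  have hAmeas : MeasurableSet A := by
    have hcont : Continuous fun p : ℝ × ℝ => |p.1 + c * p.2| := by fun_prop
    exact hcont.measurable measurableSet_Iio
  have hev : {ω | |U (m + 1) ω| < δ} = (fun ω => (R ω, Z 1 ω)) ⁻¹' A := by
    ext ω
    simp only [Set.mem_setOf_eq, Set.mem_preimage, hA, hR]
    constructor <;> intro h <;> [skip; skip] <;>
      · convert h using 2 <;> ring
  haveI : IsProbabilityMeasure (μ.map R) := Measure.isProbabilityMeasure_map hRmeas.aemeasurable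
  have hslice : ∀ x : ℝ, (Prod.mk x ⁻¹' A) = Set.Ioo ((-δ - x) / c) ((δ - x) / c) := by
    intro x
    ext z
    simp only [Set.mem_preimage, hA, Set.mem_setOf_eq, Set.mem_Ioo, abs_lt,
      div_lt_iff₀ hc, lt_div_iff₀ hc]
    constructor <;> rintro ⟨h1, h2⟩ <;> constructor <;> nlinarith
  calc μ {ω | |U (m + 1) ω| < δ}
      = (μ.map R).prod (gaussianReal 0 ⟨σ ^ 2, sq_nonneg σ⟩) A := by
        rw [hev, ← Measure.map_apply (hRmeas.prodMk (hZmeas 1)) hAmeas, hmap]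
    _ = ∫⁻ x, gaussianReal 0 ⟨σ ^ 2, sq_nonneg σ⟩ (Prod.mk x ⁻¹' A) ∂(μ.map R) := by
        haveI := instIsProbabilityMeasureGaussianReal 0 ⟨σ ^ 2, sq_nonneg σ⟩
        exact Measure.prod_apply hAmeas
    _ ≤ ∫⁻ _, ENNReal.ofReal ((2 * δ / c) * (Real.sqrt (2 * π * σ ^ 2))⁻¹) ∂(μ.map R) := by
        refine lintegral_mono fun x => ?_
        rw [hslice x]
        refine le_trans (gaussianReal_Ioo_le _ hv _ _) (ENNReal.ofReal_le_ofReal ?_)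
        have h2δ : (δ - x) / c - (-δ - x) / c = 2 * δ / c := by
          field_simp
          ring
        rw [h2δ]
        exact le_rfl
    _ = ENNReal.ofReal ((2 * δ / c) * (Real.sqrt (2 * π * σ ^ 2))⁻¹) := by
        rw [lintegral_const, measure_univ, mul_one]




lemma eventual_bound (a σ ε : ℝ) (ha : 1 < a) (hσ : 0 < σ) (hε : 0 < ε)
    (η : ℕ → ℝ) (hηpos : ∀ n, 0 < η n)
    (hηgrow : Tendsto (fun n : ℕ => Real.sqrt n * η n) atTop atTop) :
    ∀ᶠ n : ℕ in atTop, 2 ≤ n ∧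
      Real.exp (-(η n ^ 2 / (2 * σ ^ 2)) * Real.exp ((n:ℝ) * ε / 4) ^ 2)
        + 2 * Real.exp ((n:ℝ) * ε / 4) / a ^ (n - 2) * (Real.sqrt (2 * π * σ ^ 2))⁻¹
        ≤ Real.exp (-(n:ℝ) * (Real.log a - ε)) := by
  have ha0 : (0:ℝ) < a := lt_trans one_pos ha
  have hla : 0 < Real.log a := Real.log_pos ha
  set C : ℝ := (Real.sqrt (2 * π * σ ^ 2))⁻¹ with hC
  have hC0 : 0 < C := by rw [hC]; positivity
  set cst : ℝ := Real.log a + ε + 2 with hcst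
  have hcst0 : 0 < cst := by rw [hcst]; linarith
  have h1 : ∀ᶠ n : ℕ in atTop, 1 ≤ Real.sqrt n * η n := hηgrow.eventually_ge_atTop 1
  have hx : Tendsto (fun n : ℕ => (n:ℝ) * ε / 2) atTop atTop := by
    apply Tendsto.atTop_div_const two_pos
    exact Tendsto.atTop_mul_const hε tendsto_natCast_atTop_atTop
  have hx3 : Tendsto (fun n : ℕ => 3 * ((n:ℝ) * ε) / 4) atTop atTop := by
    apply Tendsto.atTop_div_const (by norm_num : (0:ℝ) < 4)
    exact Tendsto.const_mul_atTop (by norm_num)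
      (Tendsto.atTop_mul_const hε tendsto_natCast_atTop_atTop)
  have h2 : ∀ᶠ n : ℕ in atTop, 2 * σ ^ 2 * cst * (n:ℝ) ^ 2 ≤ Real.exp ((n:ℝ) * ε / 2) := by
    have hexp := (Real.tendsto_exp_div_pow_atTop 2).comp hx
    have h2' := hexp.eventually_ge_atTop (2 * σ ^ 2 * cst / (ε / 2) ^ 2)
    filter_upwards [h2', eventually_ge_atTop 1] with n hn hn1
    have hnpos : (0:ℝ) < n := by exact_mod_cast hn1
    simp only [Function.comp] at hn
    have heq : 2 * σ ^ 2 * cst * (n:ℝ) ^ 2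
        = (2 * σ ^ 2 * cst / (ε / 2) ^ 2) * ((n:ℝ) * ε / 2) ^ 2 := by
      field_simp
    rw [heq]
    calc (2 * σ ^ 2 * cst / (ε / 2) ^ 2) * ((n:ℝ) * ε / 2) ^ 2
        ≤ (Real.exp ((n:ℝ) * ε / 2) / ((n:ℝ) * ε / 2) ^ 2) * ((n:ℝ) * ε / 2) ^ 2 :=
          mul_le_mul_of_nonneg_right hn (sq_nonneg _)
      _ = Real.exp ((n:ℝ) * ε / 2) := div_mul_cancel₀ _ (by positivity)
  have h3 : ∀ᶠ n : ℕ in atTop, 4 * a ^ 2 * C ≤ Real.exp (3 * ((n:ℝ) * ε) / 4) :=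
    (Real.tendsto_exp_atTop.comp hx3).eventually_ge_atTop _
  filter_upwards [h1, h2, h3, eventually_ge_atTop 2] with n e1 e2 e3 e4
  refine ⟨e4, ?_⟩
  have hn1 : (1:ℝ) ≤ (n:ℝ) := by exact_mod_cast le_trans (by norm_num) e4
  have hn0 : (0:ℝ) < (n:ℝ) := lt_of_lt_of_le one_pos hn1
  have hηn := hηpos n
  have hδ2 : Real.exp ((n:ℝ) * ε / 4) ^ 2 = Real.exp ((n:ℝ) * ε / 2) := by
    rw [sq, ← Real.exp_add]
    congr 1
    ring
  set δ : ℝ := Real.exp ((n:ℝ) * ε / 4) with hδ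
  have hδ0 : 0 < δ := Real.exp_pos _
  -- claim 1
  have hη2 : 1 ≤ (n:ℝ) * η n ^ 2 := by
    have hs : Real.sqrt (n:ℝ) ^ 2 = (n:ℝ) := Real.sq_sqrt hn0.le
    nlinarith [e1, Real.sqrt_nonneg (n:ℝ)]
  have hlog2 : Real.log 2 < 2 := lt_of_le_of_lt (Real.log_le_sub_one_of_pos two_pos) (by norm_num)
  have hstep1 : cst * (n:ℝ) ≤ η n ^ 2 / (2 * σ ^ 2) * Real.exp ((n:ℝ) * ε / 2) := by
    rw [← mul_le_mul_iff_of_pos_left (show (0:ℝ) < 2 * σ ^ 2 * (n:ℝ) by positivity)]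
    have hr : 2 * σ ^ 2 * (n:ℝ) * (η n ^ 2 / (2 * σ ^ 2) * Real.exp ((n:ℝ) * ε / 2))
        = ((n:ℝ) * η n ^ 2) * Real.exp ((n:ℝ) * ε / 2) := by
      field_simp
    rw [hr]
    nlinarith [e2, hη2, Real.exp_pos ((n:ℝ) * ε / 2)]
  have hstep2 : (n:ℝ) * (Real.log a - ε) + Real.log 2 ≤ cst * (n:ℝ) := by
    rw [hcst]
    nlinarith [mul_nonneg hn0.le hε.le]
  have c1 : Real.exp (-(η n ^ 2 / (2 * σ ^ 2)) * δ ^ 2)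
      ≤ Real.exp (-(n:ℝ) * (Real.log a - ε)) / 2 := by
    rw [hδ, hδ2]
    have harg : -(η n ^ 2 / (2 * σ ^ 2)) * Real.exp ((n:ℝ) * ε / 2)
        ≤ -((n:ℝ) * (Real.log a - ε) + Real.log 2) := by
      have := le_trans hstep2 hstep1
      linarith
    calc Real.exp (-(η n ^ 2 / (2 * σ ^ 2)) * Real.exp ((n:ℝ) * ε / 2))
        ≤ Real.exp (-((n:ℝ) * (Real.log a - ε) + Real.log 2)) := Real.exp_le_exp.mpr harg
      _ = Real.exp (-(n:ℝ) * (Real.log a - ε)) / 2 := by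
          rw [neg_add, Real.exp_add, Real.exp_neg (Real.log 2), Real.exp_log two_pos, neg_mul]
          rw [Real.exp_neg]
          ring
  -- claim 2
  have hpow : a ^ (n - 2) = a ^ n / a ^ 2 := pow_sub₀ a ha0.ne' e4
  have hBn : Real.exp (-(n:ℝ) * (Real.log a - ε)) = Real.exp ((n:ℝ) * ε) / a ^ n := by
    rw [eq_div_iff (pow_pos ha0 n).ne']
    have han : (a:ℝ) ^ n = Real.exp ((n:ℝ) * Real.log a) := by
      rw [Real.exp_nat_mul, Real.exp_log ha0]
    rw [han, ← Real.exp_add]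
    congr 1
    ring
  have hexpε : Real.exp ((n:ℝ) * ε) = δ * Real.exp (3 * ((n:ℝ) * ε) / 4) := by
    rw [hδ, ← Real.exp_add]
    congr 1
    ring
  have hnum : 2 * δ * a ^ 2 * C * 2 ≤ Real.exp ((n:ℝ) * ε) := by
    rw [hexpε]
    calc 2 * δ * a ^ 2 * C * 2 = δ * (4 * a ^ 2 * C) := by ring
      _ ≤ δ * Real.exp (3 * ((n:ℝ) * ε) / 4) := mul_le_mul_of_nonneg_left e3 hδ0.le
  have c2 : 2 * δ / a ^ (n - 2) * C ≤ Real.exp (-(n:ℝ) * (Real.log a - ε)) / 2 := by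
    rw [hpow, hBn]
    have h1' : 2 * δ / (a ^ n / a ^ 2) * C = (2 * δ * a ^ 2 * C) / a ^ n := by
      field_simp
    have h2' : Real.exp ((n:ℝ) * ε) / a ^ n / 2 = (Real.exp ((n:ℝ) * ε) / 2) / a ^ n := by
      ring
    rw [h1', h2']
    rw [div_le_div_iff_of_pos_right (pow_pos ha0 n)]
    linarith
  rw [hδ2] at c1
  calc Real.exp (-(η n ^ 2 / (2 * σ ^ 2)) * Real.exp ((n:ℝ) * ε / 4) ^ 2)
        + 2 * Real.exp ((n:ℝ) * ε / 4) / a ^ (n - 2) * (Real.sqrt (2 * π * σ ^ 2))⁻¹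
      = Real.exp (-(η n ^ 2 / (2 * σ ^ 2)) * Real.exp ((n:ℝ) * ε / 2))
        + 2 * δ / a ^ (n - 2) * C := by rw [hδ2]
    _ ≤ Real.exp (-(n:ℝ) * (Real.log a - ε)) / 2
        + Real.exp (-(n:ℝ) * (Real.log a - ε)) / 2 := add_le_add c1 c2
    _ = Real.exp (-(n:ℝ) * (Real.log a - ε)) := by ring


lemma num_id (hU : ∀ i, U (i + 1) = fun ω => a * U i ω + Z (i + 1) ω) (m : ℕ) (ω : Ω) :
    (∑ i ∈ Finset.Icc 1 m, U i ω * U (i + 1) ω) = a * Ssum U m ω + Msum U Z m ω := by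
  simp only [Ssum, Msum, Finset.mul_sum, ← Finset.sum_add_distrib]
  refine Finset.sum_congr rfl fun i _ => ?_
  rw [hU i]
  ring


end S6Aux

theorem statement6
    {Ω : Type*} [MeasurableSpace Ω] (μ : Measure Ω) [IsProbabilityMeasure μ]
    (a σ : ℝ) (ha : 1 < a) (hσ : 0 < σ)
    (Z : ℕ → Ω → ℝ) (hZmeas : ∀ i, Measurable (Z i))
    (hZindep : iIndepFun Z μ)
    (hZlaw : ∀ i, Measure.map (Z i) μ = gaussianReal 0 ⟨σ ^ 2, sq_nonneg σ⟩)
    (U : ℕ → Ω → ℝ) (hU0 : U 0 = fun _ => 0)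
    (hU : ∀ i, U (i + 1) = fun ω => a * U i ω + Z (i + 1) ω)
    (η : ℕ → ℝ) (hηpos : ∀ n, 0 < η n)
    (hηgrow : Tendsto (fun n : ℕ => Real.sqrt n * η n) atTop atTop) :
    ∀ ε : ℝ, 0 < ε → ∃ N : ℕ, ∀ n : ℕ, N ≤ n →
      (μ {ω | aML U n ω - a > η n}).toReal ≤ Real.exp (-(n : ℝ) * (Real.log a - ε)) ∧
        (μ {ω | aML U n ω - a < -(η n)}).toReal ≤ Real.exp (-(n : ℝ) * (Real.log a - ε)) := by
  intro ε hε
  have ha0 : (0:ℝ) < a := lt_trans one_pos ha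
  obtain ⟨N, hN⟩ := Filter.eventually_atTop.mp
    (S6Aux.eventual_bound a σ ε ha hσ hε η hηpos hηgrow)
  refine ⟨N, fun n hn => ?_⟩
  obtain ⟨hn2, hineq⟩ := hN n hn
  set δ : ℝ := Real.exp ((n:ℝ) * ε / 4) with hδdef
  have hδ0 : 0 < δ := Real.exp_pos _
  have hr0 : (0:ℝ) < δ ^ 2 := by positivity
  -- single term bound
  have hS_ge : ∀ ω, (U (n - 1) ω) ^ 2 ≤ S6Aux.Ssum U (n - 1) ω := fun ω =>
    Finset.single_le_sum (f := fun i => (U i ω) ^ 2) (fun i _ => sq_nonneg _)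
      (Finset.mem_Icc.mpr ⟨by omega, le_rfl⟩)
  have key : ∀ ω, 0 < S6Aux.Ssum U (n - 1) ω →
      aML U n ω = a + S6Aux.Msum U Z (n - 1) ω / S6Aux.Ssum U (n - 1) ω := by
    intro ω hS
    rw [aML, S6Aux.num_id hU (n - 1) ω]
    have : (∑ i ∈ Finset.Icc 1 (n - 1), (U i ω) ^ 2) = S6Aux.Ssum U (n - 1) ω := rfl
    rw [this, add_div, mul_div_assoc, div_self hS.ne', mul_one]
  have hup : {ω | aML U n ω - a > η n} ⊆
      {ω | η n * S6Aux.Ssum U (n - 1) ω < 1 * S6Aux.Msum U Z (n - 1) ω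
          ∧ δ ^ 2 ≤ S6Aux.Ssum U (n - 1) ω}
        ∪ {ω | |U (n - 1) ω| < δ} := by
    intro ω hω
    simp only [Set.mem_setOf_eq, gt_iff_lt] at hω
    by_cases hS : δ ^ 2 ≤ S6Aux.Ssum U (n - 1) ω
    · left
      have hSpos : 0 < S6Aux.Ssum U (n - 1) ω := lt_of_lt_of_le hr0 hS
      refine ⟨?_, hS⟩
      rw [key ω hSpos] at hω
      rw [one_mul]
      have : η n < S6Aux.Msum U Z (n - 1) ω / S6Aux.Ssum U (n - 1) ω := by linarith
      exact (lt_div_iff₀ hSpos).mp this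
    · right
      push_neg at hS
      have h1 := hS_ge ω
      simp only [Set.mem_setOf_eq]
      nlinarith [abs_nonneg (U (n - 1) ω), sq_abs (U (n - 1) ω)]
  have hdown : {ω | aML U n ω - a < -(η n)} ⊆
      {ω | η n * S6Aux.Ssum U (n - 1) ω < (-1) * S6Aux.Msum U Z (n - 1) ω
          ∧ δ ^ 2 ≤ S6Aux.Ssum U (n - 1) ω}
        ∪ {ω | |U (n - 1) ω| < δ} := by
    intro ω hω
    simp only [Set.mem_setOf_eq] at hω
    by_cases hS : δ ^ 2 ≤ S6Aux.Ssum U (n - 1) ω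
    · left
      have hSpos : 0 < S6Aux.Ssum U (n - 1) ω := lt_of_lt_of_le hr0 hS
      refine ⟨?_, hS⟩
      rw [key ω hSpos] at hω
      have : S6Aux.Msum U Z (n - 1) ω / S6Aux.Ssum U (n - 1) ω < -(η n) := by linarith
      have h2 := (div_lt_iff₀ hSpos).mp this
      nlinarith
    · right
      push_neg at hS
      have h1 := hS_ge ω
      simp only [Set.mem_setOf_eq]
      nlinarith [abs_nonneg (U (n - 1) ω), sq_abs (U (n - 1) ω)]
  have hb1u := S6Aux.tail_bound hσ hZmeas hZindep hZlaw hU0 hU (n - 1)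
    (hηpos n) hr0 1 (Or.inl rfl)
  have hb1d := S6Aux.tail_bound hσ hZmeas hZindep hZlaw hU0 hU (n - 1)
    (hηpos n) hr0 (-1) (Or.inr rfl)
  have hb2 := S6Aux.small_ball ha0 hσ hZmeas hZindep hZlaw hU0 hU (n - 2) hδ0
  have hidx : n - 2 + 1 = n - 1 := by omega
  rw [hidx] at hb2
  have hsum : ∀ s : ℝ, ENNReal.ofReal (Real.exp (-(η n ^ 2 / (2 * σ ^ 2)) * δ ^ 2))
      + ENNReal.ofReal ((2 * δ / a ^ (n - 2)) * (Real.sqrt (2 * π * σ ^ 2))⁻¹)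
      ≤ ENNReal.ofReal (Real.exp (-(n:ℝ) * (Real.log a - ε))) := by
    intro _
    rw [← ENNReal.ofReal_add (Real.exp_nonneg _) (by positivity)]
    exact ENNReal.ofReal_le_ofReal hineq
  constructor
  · refine ENNReal.toReal_le_of_le_ofReal (Real.exp_nonneg _) ?_
    calc μ {ω | aML U n ω - a > η n}
        ≤ μ ({ω | η n * S6Aux.Ssum U (n - 1) ω < 1 * S6Aux.Msum U Z (n - 1) ω
            ∧ δ ^ 2 ≤ S6Aux.Ssum U (n - 1) ω} ∪ {ω | |U (n - 1) ω| < δ}) :=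
          measure_mono hup
      _ ≤ μ {ω | η n * S6Aux.Ssum U (n - 1) ω < 1 * S6Aux.Msum U Z (n - 1) ω
            ∧ δ ^ 2 ≤ S6Aux.Ssum U (n - 1) ω} + μ {ω | |U (n - 1) ω| < δ} :=
          measure_union_le _ _
      _ ≤ ENNReal.ofReal (Real.exp (-(η n ^ 2 / (2 * σ ^ 2)) * δ ^ 2))
          + ENNReal.ofReal ((2 * δ / a ^ (n - 2)) * (Real.sqrt (2 * π * σ ^ 2))⁻¹) :=
          add_le_add hb1u hb2
      _ ≤ ENNReal.ofReal (Real.exp (-(n:ℝ) * (Real.log a - ε))) := hsum 1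
  · refine ENNReal.toReal_le_of_le_ofReal (Real.exp_nonneg _) ?_
    calc μ {ω | aML U n ω - a < -(η n)}
        ≤ μ ({ω | η n * S6Aux.Ssum U (n - 1) ω < (-1) * S6Aux.Msum U Z (n - 1) ω
            ∧ δ ^ 2 ≤ S6Aux.Ssum U (n - 1) ω} ∪ {ω | |U (n - 1) ω| < δ}) :=
          measure_mono hdown
      _ ≤ μ {ω | η n * S6Aux.Ssum U (n - 1) ω < (-1) * S6Aux.Msum U Z (n - 1) ω
            ∧ δ ^ 2 ≤ S6Aux.Ssum U (n - 1) ω} + μ {ω | |U (n - 1) ω| < δ} :=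
          measure_union_le _ _
      _ ≤ ENNReal.ofReal (Real.exp (-(η n ^ 2 / (2 * σ ^ 2)) * δ ^ 2))
          + ENNReal.ofReal ((2 * δ / a ^ (n - 2)) * (Real.sqrt (2 * π * σ ^ 2))⁻¹) :=
          add_le_add hb1d hb2
      _ ≤ ENNReal.ofReal (Real.exp (-(n:ℝ) * (Real.log a - ε))) := hsum (-1)
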